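/- The variety DB of (bounded) distributive bilattices is generated as a quasivariety by the four-element bilattice 4, i.e., every distributive bilattice embeds into a power of 4. Equivalently: for every distributive bilattice A and every pair of distinct elements a ≠ b in A, there is a bilattice homomorphism h : A → 4 with h(a) ≠ h(b). -/
import Mathlib


/-- An unbounded distributive pre-bilattice: two lattice structures
`(∨_t, ∧_t)` and `(∨_k, ∧_k)` on the same carrier, with each of the four
operations distributing over each of the other three. -/
structure DPBU (A : Type*) where
  tsup : A → A → A
  tinf : A → A → A
  ksup : A → A → A
  kinf : A → A → A
  tsup_comm : ∀ a b, tsup a b = tsup b a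
  tinf_comm : ∀ a b, tinf a b = tinf b a
  tsup_assoc : ∀ a b c, tsup (tsup a b) c = tsup a (tsup b c)
  tinf_assoc : ∀ a b c, tinf (tinf a b) c = tinf a (tinf b c)
  tsup_absorb : ∀ a b, tsup a (tinf a b) = a
  tinf_absorb : ∀ a b, tinf a (tsup a b) = a
  ksup_comm : ∀ a b, ksup a b = ksup b a
  kinf_comm : ∀ a b, kinf a b = kinf b a
  ksup_assoc : ∀ a b c, ksup (ksup a b) c = ksup a (ksup b c)
  kinf_assoc : ∀ a b c, kinf (kinf a b) c = kinf a (kinf b c)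
  ksup_absorb : ∀ a b, ksup a (kinf a b) = a
  kinf_absorb : ∀ a b, kinf a (ksup a b) = a
  tsup_tinf : ∀ a b c, tsup a (tinf b c) = tinf (tsup a b) (tsup a c)
  tsup_ksup : ∀ a b c, tsup a (ksup b c) = ksup (tsup a b) (tsup a c)
  tsup_kinf : ∀ a b c, tsup a (kinf b c) = kinf (tsup a b) (tsup a c)
  tinf_tsup : ∀ a b c, tinf a (tsup b c) = tsup (tinf a b) (tinf a c)
  tinf_ksup : ∀ a b c, tinf a (ksup b c) = ksup (tinf a b) (tinf a c)
  tinf_kinf : ∀ a b c, tinf a (kinf b c) = kinf (tinf a b) (tinf a c)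
  ksup_tsup : ∀ a b c, ksup a (tsup b c) = tsup (ksup a b) (ksup a c)
  ksup_tinf : ∀ a b c, ksup a (tinf b c) = tinf (ksup a b) (ksup a c)
  ksup_kinf : ∀ a b c, ksup a (kinf b c) = kinf (ksup a b) (ksup a c)
  kinf_tsup : ∀ a b c, kinf a (tsup b c) = tsup (kinf a b) (kinf a c)
  kinf_tinf : ∀ a b c, kinf a (tinf b c) = tinf (kinf a b) (kinf a c)
  kinf_ksup : ∀ a b c, kinf a (ksup b c) = ksup (kinf a b) (kinf a c)

/-- The truth order `≤_t`. -/
def DPBU.tle {A : Type*} (B : DPBU A) (a b : A) : Prop := B.tsup a b = b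

/-- The knowledge order `≤_k`. -/
def DPBU.kle {A : Type*} (B : DPBU A) (a b : A) : Prop := B.ksup a b = b

/-- A (bounded) distributive bilattice: bounded distributive t-lattice,
k-bounds `0_k`, `1_k`, k-operations given by the 90° Lemma formulas, and an
involutory negation which is a dual endomorphism of the bounded t-lattice
and an endomorphism of the bounded k-lattice. -/
structure DB (A : Type*) extends DPBU A where
  neg : A → A
  tbot : A
  ttop : A
  kbot : A
  ktop : A
  tbot_le : ∀ a, tsup tbot a = a
  le_ttop : ∀ a, tsup a ttop = ttop
  kbot_le : ∀ a, ksup kbot a = a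
  le_ktop : ∀ a, ksup a ktop = ktop
  ksup_def : ∀ a b, ksup a b = tsup (tinf (tinf a b) kbot) (tinf (tsup a b) ktop)
  kinf_def : ∀ a b, kinf a b = tsup (tinf (tinf a b) ktop) (tinf (tsup a b) kbot)
  neg_neg : ∀ a, neg (neg a) = a
  neg_tsup : ∀ a b, neg (tsup a b) = tinf (neg a) (neg b)
  neg_tinf : ∀ a b, neg (tinf a b) = tsup (neg a) (neg b)
  neg_ksup : ∀ a b, neg (ksup a b) = ksup (neg a) (neg b)
  neg_kinf : ∀ a b, neg (kinf a b) = kinf (neg a) (neg b)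
  neg_tbot : neg tbot = ttop
  neg_ttop : neg ttop = tbot
  neg_kbot : neg kbot = kbot
  neg_ktop : neg ktop = ktop

/-- The four-element distributive bilattice `4` (= FOUR with bounds), on binary
strings `{00,01,10,11}` represented as `Bool × Bool` (so `00 = (false,false)`
etc.).  The t-order has bottom `00` and top `11`; the k-order has bottom `01`
and top `10`; negation swaps `00 ↔ 11` and fixes `01`, `10`. -/
def fourDB : DB (Bool × Bool) where
  tsup p q := (p.1 || q.1, p.2 || q.2)
  tinf p q := (p.1 && q.1, p.2 && q.2)
  ksup p q := (p.1 || q.1, p.2 && q.2)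
  kinf p q := (p.1 && q.1, p.2 || q.2)
  neg p := (!p.2, !p.1)
  tbot := (false, false)
  ttop := (true, true)
  kbot := (false, true)
  ktop := (true, false)
  tsup_comm := by decide
  tinf_comm := by decide
  tsup_assoc := by decide
  tinf_assoc := by decide
  tsup_absorb := by decide
  tinf_absorb := by decide
  ksup_comm := by decide
  kinf_comm := by decide
  ksup_assoc := by decide
  kinf_assoc := by decide
  ksup_absorb := by decide
  kinf_absorb := by decide
  tsup_tinf := by decide
  tsup_ksup := by decide
  tsup_kinf := by decide
  tinf_tsup := by decide
  tinf_ksup := by decide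
  tinf_kinf := by decide
  ksup_tsup := by decide
  ksup_tinf := by decide
  ksup_kinf := by decide
  kinf_tsup := by decide
  kinf_tinf := by decide
  kinf_ksup := by decide
  tbot_le := by decide
  le_ttop := by decide
  kbot_le := by decide
  le_ktop := by decide
  ksup_def := by decide
  kinf_def := by decide
  neg_neg := by decide
  neg_tsup := by decide
  neg_tinf := by decide
  neg_ksup := by decide
  neg_kinf := by decide
  neg_tbot := by decide
  neg_ttop := by decide
  neg_kbot := by decide
  neg_ktop := by decide

/-- Proposition 4.1: `DB = ISP(4)`.  For every distributive bilattice `A` and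
distinct `a ≠ b` there is a bilattice homomorphism `h : A → 4` separating `a`
and `b`; hence every distributive bilattice embeds into a power of `4`. -/
theorem stmt_12 {A : Type*} (B : DB A) (a b : A) (hab : a ≠ b) :
    ∃ h : A → Bool × Bool,
      (∀ x y, h (B.tsup x y) = fourDB.tsup (h x) (h y)) ∧
      (∀ x y, h (B.tinf x y) = fourDB.tinf (h x) (h y)) ∧
      (∀ x, h (B.neg x) = fourDB.neg (h x)) ∧
      h B.tbot = fourDB.tbot ∧ h B.ttop = fourDB.ttop ∧
      h B.kbot = fourDB.kbot ∧ h B.ktop = fourDB.ktop ∧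
      h a ≠ h b := by
  classical
  letI : Max A := ⟨B.tsup⟩
  letI : Min A := ⟨B.tinf⟩
  letI : Lattice A := Lattice.mk' B.tsup_comm B.tsup_assoc B.tinf_comm B.tinf_assoc
    B.tsup_absorb B.tinf_absorb
  letI : DistribLattice A :=
    { (inferInstance : Lattice A) with
      le_sup_inf := fun x y z => le_of_eq (B.tsup_tinf x y z).symm }
  letI : BoundedOrder A :=
    { top := B.ttop, le_top := fun a => B.le_ttop a,
      bot := B.tbot, bot_le := fun a => B.tbot_le a }
  have et : ∀ x y : A, B.tsup x y = x ⊔ y := fun _ _ => rfl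
  have ei : ∀ x y : A, B.tinf x y = x ⊓ y := fun _ _ => rfl
  have eb : B.tbot = (⊥ : A) := rfl
  have etp : B.ttop = (⊤ : A) := rfl
  -- kbot and ktop are complementary in the t-lattice
  have hk1 : B.kbot ⊓ B.ktop = (⊥ : A) := by
    have h := B.kbot_le B.tbot
    rw [B.ksup_def] at h
    simp only [et, ei, eb] at h
    simpa using h
  have hk2 : B.kbot ⊔ B.ktop = (⊤ : A) := by
    have h := B.kbot_le B.ttop
    rw [B.ksup_def] at h
    simp only [et, ei, etp] at h
    simpa using h
  -- negation is injective and antitone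
  have neg_inj : ∀ x y : A, B.neg x = B.neg y → x = y := by
    intro x y h
    rw [← B.neg_neg x, h, B.neg_neg]
  -- main separation lemma
  have main : ∀ u v : A, ¬ (u ⊓ B.ktop ≤ v ⊓ B.ktop) →
      ∃ J : Order.Ideal A, Order.Ideal.IsPrime J ∧ B.kbot ∈ J ∧ B.ktop ∉ J ∧
        u ∉ J ∧ v ∈ J := by
    intro u v huv
    have hdisj : Disjoint ((Order.PFilter.principal (u ⊓ B.ktop) : Order.PFilter A) : Set A)
        ((Order.Ideal.principal (v ⊓ B.ktop ⊔ B.kbot) : Order.Ideal A) : Set A) := by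
      rw [Set.disjoint_left]
      intro x hxF hxI
      have h1 : u ⊓ B.ktop ≤ x := hxF
      have h2 : x ≤ v ⊓ B.ktop ⊔ B.kbot := hxI
      have h3 : u ⊓ B.ktop ≤ (v ⊓ B.ktop ⊔ B.kbot) ⊓ B.ktop :=
        le_inf (h1.trans h2) inf_le_right
      have h4 : (v ⊓ B.ktop ⊔ B.kbot) ⊓ B.ktop = v ⊓ B.ktop := by
        rw [inf_sup_right, inf_assoc, inf_idem, hk1]
        simp
      exact huv (h4 ▸ h3)
    obtain ⟨J, hJp, hIJ, hdis⟩ :=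
      DistribLattice.prime_ideal_of_disjoint_filter_ideal hdisj
    have hgen : v ⊓ B.ktop ⊔ B.kbot ∈ J := hIJ Order.Ideal.mem_principal_self
    have hkbot : B.kbot ∈ J := J.lower le_sup_right hgen
    have hvK : v ⊓ B.ktop ∈ J := J.lower le_sup_left hgen
    have huK : u ⊓ B.ktop ∉ J := by
      intro h
      exact Set.disjoint_left.mp hdis (Order.PFilter.mem_principal.mpr le_rfl) h
    have hktop : B.ktop ∉ J := fun h => huK (J.lower inf_le_right h)
    have hu : u ∉ J := fun h => huK (J.lower inf_le_left h)
    have hv : v ∈ J := by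
      rcases hJp.mem_or_mem hvK with h | h
      · exact h
      · exact absurd h hktop
    exact ⟨J, hJp, hkbot, hktop, hu, hv⟩
  -- obtain a prime ideal separating a and b (directly or via negation)
  have sep : ∃ J : Order.Ideal A, Order.Ideal.IsPrime J ∧ B.kbot ∈ J ∧ B.ktop ∉ J ∧
      ¬ (((a ∈ J) ↔ (b ∈ J)) ∧ ((B.neg a ∈ J) ↔ (B.neg b ∈ J))) := by
    have negktop : ∀ x : A, B.neg x ⊓ B.ktop = B.neg (x ⊔ B.ktop) := by
      intro x
      rw [← et, B.neg_tsup, B.neg_ktop, ei]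
    have key : ∀ u v : A, u ⊓ B.ktop ≠ v ⊓ B.ktop →
        ∃ J : Order.Ideal A, Order.Ideal.IsPrime J ∧ B.kbot ∈ J ∧ B.ktop ∉ J ∧
          ¬ ((u ∈ J) ↔ (v ∈ J)) := by
      intro u v hne
      have hcases : ¬ (u ⊓ B.ktop ≤ v ⊓ B.ktop) ∨ ¬ (v ⊓ B.ktop ≤ u ⊓ B.ktop) :=
        not_and_or.mp fun hc => hne (le_antisymm hc.1 hc.2)
      rcases hcases with h | h
      · obtain ⟨J, hp, hA, hB2, hu, hv⟩ := main u v h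
        exact ⟨J, hp, hA, hB2, fun hiff => hu (hiff.mpr hv)⟩
      · obtain ⟨J, hp, hA, hB2, hv', hu'⟩ := main v u h
        exact ⟨J, hp, hA, hB2, fun hiff => hv' (hiff.mp hu')⟩
    by_cases h1 : a ⊓ B.ktop = b ⊓ B.ktop
    · -- use negations
      have hne2 : B.neg a ⊓ B.ktop ≠ B.neg b ⊓ B.ktop := by
        intro hEq
        rw [negktop, negktop] at hEq
        have e2 : a ⊔ B.ktop = b ⊔ B.ktop := neg_inj _ _ hEq
        have hx : ∀ x : A, (x ⊔ B.ktop) ⊓ B.kbot = x ⊓ B.kbot := by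
          intro x
          rw [inf_sup_right, inf_comm B.ktop B.kbot, hk1, sup_bot_eq]
        have e3 : a ⊓ B.kbot = b ⊓ B.kbot := by
          rw [← hx a, ← hx b, e2]
        apply hab
        calc a = a ⊓ (B.kbot ⊔ B.ktop) := by rw [hk2, inf_top_eq]
          _ = a ⊓ B.kbot ⊔ a ⊓ B.ktop := inf_sup_left a _ _
          _ = b ⊓ B.kbot ⊔ b ⊓ B.ktop := by rw [e3, h1]
          _ = b ⊓ (B.kbot ⊔ B.ktop) := (inf_sup_left b _ _).symm
          _ = b := by rw [hk2, inf_top_eq]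
      obtain ⟨J, hp, hA, hB2, hiff⟩ := key _ _ hne2
      exact ⟨J, hp, hA, hB2, fun h => hiff h.2⟩
    · obtain ⟨J, hp, hA, hB2, hiff⟩ := key _ _ h1
      exact ⟨J, hp, hA, hB2, fun h => hiff h.1⟩
  obtain ⟨J, hJp, hkbot, hktop, hsep⟩ := sep
  have supmem : ∀ x y : A, x ⊔ y ∈ J ↔ x ∈ J ∧ y ∈ J := fun x y =>
    Order.Ideal.sup_mem_iff
  have infmem : ∀ x y : A, x ⊓ y ∈ J ↔ x ∈ J ∨ y ∈ J := by
    intro x y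
    constructor
    · exact hJp.mem_or_mem
    · rintro (h | h)
      · exact J.lower inf_le_left h
      · exact J.lower inf_le_right h
  have hbot : (⊥ : A) ∈ J := J.lower bot_le hkbot
  have htop : (⊤ : A) ∉ J := fun h => hktop (J.lower le_top h)
  refine ⟨fun x => (decide (x ∉ J), decide (B.neg x ∈ J)), ?_, ?_, ?_, ?_, ?_, ?_, ?_, ?_⟩
  · intro x y
    show (decide (B.tsup x y ∉ J), decide (B.neg (B.tsup x y) ∈ J)) =
      (decide (x ∉ J) || decide (y ∉ J), decide (B.neg x ∈ J) || decide (B.neg y ∈ J))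
    rw [Prod.mk.injEq]
    constructor
    · rw [← Bool.decide_or]
      apply decide_eq_decide.mpr
      rw [et, supmem]; tauto
    · rw [← Bool.decide_or]
      apply decide_eq_decide.mpr
      rw [B.neg_tsup, ei, infmem]
  · intro x y
    show (decide (B.tinf x y ∉ J), decide (B.neg (B.tinf x y) ∈ J)) =
      (decide (x ∉ J) && decide (y ∉ J), decide (B.neg x ∈ J) && decide (B.neg y ∈ J))
    rw [Prod.mk.injEq]
    constructor
    · rw [← Bool.decide_and]
      apply decide_eq_decide.mpr
      rw [ei, infmem]; tauto
    · rw [← Bool.decide_and]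
      apply decide_eq_decide.mpr
      rw [B.neg_tinf, et, supmem]
  · intro x
    show (decide (B.neg x ∉ J), decide (B.neg (B.neg x) ∈ J)) =
      (!decide (B.neg x ∈ J), !decide (x ∉ J))
    rw [Prod.mk.injEq]
    constructor
    · rw [← decide_not]
    · rw [← decide_not, B.neg_neg]
      apply decide_eq_decide.mpr
      tauto
  · show (decide (B.tbot ∉ J), decide (B.neg B.tbot ∈ J)) = (false, false)
    rw [B.neg_tbot, Prod.mk.injEq, decide_eq_false_iff_not, decide_eq_false_iff_not]
    exact ⟨not_not_intro (eb ▸ hbot), etp ▸ htop⟩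
  · show (decide (B.ttop ∉ J), decide (B.neg B.ttop ∈ J)) = (true, true)
    rw [B.neg_ttop, Prod.mk.injEq, decide_eq_true_eq, decide_eq_true_eq]
    exact ⟨etp ▸ htop, eb ▸ hbot⟩
  · show (decide (B.kbot ∉ J), decide (B.neg B.kbot ∈ J)) = (false, true)
    rw [B.neg_kbot, Prod.mk.injEq, decide_eq_false_iff_not, decide_eq_true_eq]
    exact ⟨not_not_intro hkbot, hkbot⟩
  · show (decide (B.ktop ∉ J), decide (B.neg B.ktop ∈ J)) = (true, false)
    rw [B.neg_ktop, Prod.mk.injEq, decide_eq_true_eq, decide_eq_false_iff_not]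
    exact ⟨hktop, hktop⟩
  · intro hEq
    rw [Prod.mk.injEq] at hEq
    apply hsep
    constructor
    · have := decide_eq_decide.mp hEq.1
      tauto
    · exact decide_eq_decide.mp hEq.2
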